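/- Let (A, m) be a complete Noetherian local ring with finite residue field of characteristic p, G a profinite group, and 0 → V₁ → V₂ → V₃ → 0 a short exact sequence of smooth A[G]-modules. If V₁ and V₃ are admissible, then V₂ is admissible. -/

import Mathlib

section Defs

variable (A : Type*) [CommRing A] (G : Type*) [Group G] [TopologicalSpace G]
  (M : Type*) [AddCommGroup M] [Module A M] [DistribMulAction G M] [SMulCommClass G A M]

/-- The `A`-submodule of vectors invariant under `H` and killed by the ideal `J`. -/
def invKilled (H : Subgroup G) (J : Ideal A) : Submodule A M where
  carrier := {v | (∀ h : H, (h : G) • v = v) ∧ ∀ a ∈ J, a • v = 0}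
  zero_mem' := ⟨fun _ => smul_zero _, fun _ _ => smul_zero _⟩
  add_mem' := fun hx hy =>
    ⟨fun h => by rw [smul_add, hx.1 h, hy.1 h],
     fun a ha => by rw [smul_add, hx.2 a ha, hy.2 a ha, add_zero]⟩
  smul_mem' := fun c v hv =>
    ⟨fun h => by rw [smul_comm, hv.1 h],
     fun a ha => by rw [smul_smul, mul_comm, ← smul_smul, hv.2 a ha, smul_zero]⟩

variable [IsLocalRing A]

/-- A smooth `A[G]`-module: every vector is fixed by an open subgroup and killed by a power
of the maximal ideal. -/
def IsSmoothRep : Prop :=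
  ∀ v : M, ∃ H : Subgroup G, IsOpen (H : Set G) ∧ ∃ i : ℕ, 1 ≤ i ∧
    v ∈ invKilled A G M H ((IsLocalRing.maximalIdeal A) ^ i)

/-- An admissible `A[G]`-module: for every open subgroup `H` and every `i ≥ 1`, the module
`V^H[𝔪^i]` is finitely generated. -/
def IsAdmissibleRep : Prop :=
  ∀ i : ℕ, 1 ≤ i → ∀ H : Subgroup G, IsOpen (H : Set G) →
    (invKilled A G M H ((IsLocalRing.maximalIdeal A) ^ i)).FG

end Defs

/-- Let `(A, 𝔪)` be a complete Noetherian local ring with finite residue field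
of characteristic `p`, `G` a profinite group, and `0 → M₁ → M₂ → M₃ → 0` a short exact
sequence of smooth `A[G]`-modules.  If `M₁` and `M₃` are admissible, then so is `M₂`. -/

theorem fg_of_le' {R M : Type*} [CommRing R] [IsNoetherianRing R] [AddCommGroup M]
    [Module R M] {N P : Submodule R M} (h : N ≤ P) (hP : P.FG) : N.FG := by
  haveI : IsNoetherian R P := isNoetherian_of_fg_of_noetherian P hP
  have : N = (N.comap P.subtype).map P.subtype := by
    rw [Submodule.map_comap_eq, Submodule.range_subtype, inf_eq_right.mpr h]
  rw [this]
  exact (IsNoetherian.noetherian _).map _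

theorem stmt8 (p : ℕ) (hp : p.Prime) (A : Type*) [CommRing A] [IsLocalRing A]
    [IsNoetherianRing A] [IsAdicComplete (IsLocalRing.maximalIdeal A) A]
    (hfin : Finite (IsLocalRing.ResidueField A)) [CharP (IsLocalRing.ResidueField A) p]
    (G : Type*) [Group G] [TopologicalSpace G] [IsTopologicalGroup G]
    [CompactSpace G] [TotallyDisconnectedSpace G] [T2Space G]
    (M₁ M₂ M₃ : Type*)
    [AddCommGroup M₁] [Module A M₁] [DistribMulAction G M₁] [SMulCommClass G A M₁]
    [AddCommGroup M₂] [Module A M₂] [DistribMulAction G M₂] [SMulCommClass G A M₂]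
    [AddCommGroup M₃] [Module A M₃] [DistribMulAction G M₃] [SMulCommClass G A M₃]
    (hsm₁ : IsSmoothRep A G M₁) (hsm₂ : IsSmoothRep A G M₂) (hsm₃ : IsSmoothRep A G M₃)
    (f : M₁ →ₗ[A] M₂) (g : M₂ →ₗ[A] M₃)
    (hfG : ∀ (γ : G) (v : M₁), f (γ • v) = γ • f v)
    (hgG : ∀ (γ : G) (v : M₂), g (γ • v) = γ • g v)
    (hfinj : Function.Injective f) (hgsurj : Function.Surjective g)
    (hexact : LinearMap.range f = LinearMap.ker g)
    (hadm₁ : IsAdmissibleRep A G M₁) (hadm₃ : IsAdmissibleRep A G M₃) :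
    IsAdmissibleRep A G M₂ := by
  intro i hi H hH
  set J := (IsLocalRing.maximalIdeal A) ^ i with hJ
  set N₂ := invKilled A G M₂ H J with hN₂
  apply Submodule.fg_of_fg_map_of_fg_inf_ker g
  · apply fg_of_le' (P := invKilled A G M₃ H J) _ (hadm₃ i hi H hH)
    rintro w ⟨v, hv, rfl⟩
    exact ⟨fun h => by rw [← hgG, hv.1 h], fun a ha => by
      rw [← map_smul, hv.2 a ha, map_zero]⟩
  · rw [← hexact, inf_comm, ← Submodule.map_comap_eq]
    apply Submodule.FG.map
    apply fg_of_le' (P := invKilled A G M₁ H J) _ (hadm₁ i hi H hH)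
    intro v hv
    have hv : f v ∈ N₂ := hv
    refine ⟨fun h => hfinj ?_, fun a ha => hfinj ?_⟩
    · rw [hfG, hv.1 h]
    · rw [map_smul, hv.2 a ha, map_zero]
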